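/- Let μ₁ and μ₂ be finite nonnegative Borel measures on ℝ whose two-sided Laplace transforms t ↦ ∫ e^{tx} dμᵢ(x) are finite and equal for all t in a nonempty open interval. Then μ₁ = μ₂. -/

import Mathlib

open MeasureTheory Real Set Filter Topology Metric
open scoped ENNReal NNReal ComplexConjugate
open scoped FourierTransform RealInnerProductSpace

set_option maxHeartbeats 1000000

noncomputable section EqOfLaplaceAux

lemma norm_cexp_mul_real (z : ℂ) (x : ℝ) : ‖Complex.exp (z * x)‖ = Real.exp (z.re * x) := by
  rw [Complex.norm_exp]
  congr 1
  simp [Complex.mul_re]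

lemma integrable_cexp {μ : Measure ℝ} {a b : ℝ}
    (h₁ : ∀ t ∈ Set.Ioo a b, Integrable (fun x => Real.exp (t * x)) μ)
    {z : ℂ} (hz : z.re ∈ Set.Ioo a b) :
    Integrable (fun x : ℝ => Complex.exp (z * x)) μ := by
  refine (h₁ z.re hz).mono' ?_ ?_
  · exact (Complex.continuous_exp.comp (continuous_const.mul
      Complex.continuous_ofReal)).aestronglyMeasurable
  · exact Eventually.of_forall fun x => le_of_eq (norm_cexp_mul_real z x)

lemma key_ineq {x u c ε : ℝ} (hε : 0 < ε) (hu : |u - c| ≤ ε) :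
    |x| * Real.exp (u * x) ≤ ε⁻¹ * (Real.exp ((c - 2*ε) * x) + Real.exp ((c + 2*ε) * x)) := by
  have h1 : |x| ≤ ε⁻¹ * Real.exp (ε * |x|) := by
    have h2 : ε * |x| + 1 ≤ Real.exp (ε * |x|) := Real.add_one_le_exp _
    have h3 : ε * |x| ≤ Real.exp (ε * |x|) := by nlinarith [mul_nonneg hε.le (abs_nonneg x)]
    calc |x| = ε⁻¹ * (ε * |x|) := by field_simp
      _ ≤ ε⁻¹ * Real.exp (ε * |x|) := mul_le_mul_of_nonneg_left h3 (by positivity)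
  have h2 : Real.exp (ε * |x|) * Real.exp (u * x)
      ≤ Real.exp ((c - 2*ε) * x) + Real.exp ((c + 2*ε) * x) := by
    rw [← Real.exp_add]
    have hu1 : u - c ≤ ε := (abs_le.mp hu).2
    have hu2 : -ε ≤ u - c := (abs_le.mp hu).1
    rcases le_or_gt 0 x with hx | hx
    · rw [_root_.abs_of_nonneg hx]
      have : ε * x + u * x ≤ (c + 2*ε) * x := by nlinarith
      exact le_add_of_nonneg_of_le (Real.exp_pos _).le (Real.exp_le_exp.mpr this)
    · rw [abs_of_neg hx]
      have : ε * -x + u * x ≤ (c - 2*ε) * x := by nlinarith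
      exact le_add_of_le_of_nonneg (Real.exp_le_exp.mpr this) (Real.exp_pos _).le
  calc |x| * Real.exp (u * x) ≤ (ε⁻¹ * Real.exp (ε * |x|)) * Real.exp (u * x) := by
        apply mul_le_mul_of_nonneg_right h1 (Real.exp_nonneg _)
    _ = ε⁻¹ * (Real.exp (ε * |x|) * Real.exp (u * x)) := by ring
    _ ≤ ε⁻¹ * (Real.exp ((c - 2*ε) * x) + Real.exp ((c + 2*ε) * x)) := by
        apply mul_le_mul_of_nonneg_left h2 (by positivity)

lemma hasDerivAt_laplace {μ : Measure ℝ} {a b : ℝ}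
    (h₁ : ∀ t ∈ Set.Ioo a b, Integrable (fun x => Real.exp (t * x)) μ)
    {z₀ : ℂ} (hz : z₀.re ∈ Set.Ioo a b) :
    HasDerivAt (fun z => ∫ x, Complex.exp (z * x) ∂μ)
      (∫ x : ℝ, ↑x * Complex.exp (z₀ * x) ∂μ) z₀ := by
  obtain ⟨hza, hzb⟩ := hz
  set c := z₀.re with hc
  set ε := min (c - a) (b - c) / 4 with hεdef
  have hεa : 4 * ε ≤ c - a := by
    rw [hεdef]; have := min_le_left (c - a) (b - c); linarith
  have hεb : 4 * ε ≤ b - c := by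
    rw [hεdef]; have := min_le_right (c - a) (b - c); linarith
  have hε0 : 0 < ε := by
    rw [hεdef]
    apply div_pos (lt_min (by linarith) (by linarith)) (by norm_num)
  have hs₁ : c - 2 * ε ∈ Set.Ioo a b := ⟨by linarith, by linarith⟩
  have hs₂ : c + 2 * ε ∈ Set.Ioo a b := ⟨by linarith, by linarith⟩
  refine (hasDerivAt_integral_of_dominated_loc_of_deriv_le
    (F' := fun (z : ℂ) (x : ℝ) => (x : ℂ) * Complex.exp (z * x))
    (bound := fun x => ε⁻¹ * (Real.exp ((c - 2*ε) * x) + Real.exp ((c + 2*ε) * x)))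
    (Metric.ball_mem_nhds z₀ hε0) ?_ (integrable_cexp h₁ ⟨hza, hzb⟩)
    ?_ ?_ (((h₁ _ hs₁).add (h₁ _ hs₂)).const_mul ε⁻¹) ?_).2
  · refine Eventually.of_forall fun z => ?_
    exact (Complex.continuous_exp.comp (continuous_const.mul
      Complex.continuous_ofReal)).aestronglyMeasurable
  · exact (Complex.continuous_ofReal.mul (Complex.continuous_exp.comp
      (continuous_const.mul Complex.continuous_ofReal))).aestronglyMeasurable
  · refine Eventually.of_forall fun x => fun z hzball => ?_
    have hre : |z.re - c| ≤ ε := by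
      have h5 : |(z - z₀).re| ≤ ‖z - z₀‖ := Complex.abs_re_le_norm _
      have h6 : ‖z - z₀‖ < ε := by
        rwa [Metric.mem_ball, Complex.dist_eq] at hzball
      simpa [Complex.sub_re] using h5.trans h6.le
    have h7 : ‖↑x * Complex.exp (z * x)‖ = |x| * Real.exp (z.re * x) := by
      rw [norm_mul, norm_cexp_mul_real]
      simp
    rw [h7]
    exact key_ineq hε0 hre
  · refine Eventually.of_forall fun x => fun z _ => ?_
    have := ((hasDerivAt_id z).mul_const (x : ℂ)).cexp
    simpa [mul_comm] using this

lemma laplace_eqOn_strip {μ₁ μ₂ : Measure ℝ} {a b : ℝ} (hab : a < b)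
    (h₁ : ∀ t ∈ Set.Ioo a b, Integrable (fun x => Real.exp (t * x)) μ₁)
    (h₂ : ∀ t ∈ Set.Ioo a b, Integrable (fun x => Real.exp (t * x)) μ₂)
    (heq : ∀ t ∈ Set.Ioo a b, ∫ x, Real.exp (t * x) ∂μ₁ = ∫ x, Real.exp (t * x) ∂μ₂)
    {z : ℂ} (hz : z.re ∈ Set.Ioo a b) :
    ∫ x, Complex.exp (z * x) ∂μ₁ = ∫ x, Complex.exp (z * x) ∂μ₂ := by
  set F : ℂ → ℂ := fun z => (∫ x, Complex.exp (z * x) ∂μ₁) - ∫ x, Complex.exp (z * x) ∂μ₂ with hF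
  set S : Set ℂ := Complex.re ⁻¹' (Set.Ioo a b) with hS
  have hopen : IsOpen S := isOpen_Ioo.preimage Complex.continuous_re
  have hconv : Convex ℝ S := (convex_Ioo a b).linear_preimage Complex.reLm
  have hdiff : DifferentiableOn ℂ F S := by
    intro w hw
    exact (((hasDerivAt_laplace h₁ hw).sub
      (hasDerivAt_laplace h₂ hw)).differentiableAt).differentiableWithinAt
  have hana : AnalyticOnNhd ℂ F S := hdiff.analyticOnNhd hopen
  have hreal : ∀ t ∈ Set.Ioo a b, F ((t : ℝ) : ℂ) = 0 := by
    intro t ht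
    have e : ∀ (μ : Measure ℝ), ∫ x, Complex.exp ((t : ℂ) * x) ∂μ
        = ((∫ x, Real.exp (t * x) ∂μ : ℝ) : ℂ) := by
      intro μ
      have e1 : ∫ x, ((Real.exp (t * x) : ℝ) : ℂ) ∂μ = ((∫ x, Real.exp (t * x) ∂μ : ℝ) : ℂ) :=
        integral_ofReal (𝕜 := ℂ)
      rw [← e1]
      congr 1; funext x; norm_cast
    rw [hF]
    simp only [e μ₁, e μ₂, heq t ht, sub_self]
  set t₀ : ℝ := (a + b) / 2 with ht₀def
  have ht₀ : t₀ ∈ Set.Ioo a b := ⟨by rw [ht₀def]; linarith, by rw [ht₀def]; linarith⟩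
  set u : ℕ → ℂ := fun n => ((t₀ + ((b - a) / 8) * (1 / (n + 1)) : ℝ) : ℂ) with hu
  have hun : ∀ n : ℕ, (t₀ + ((b - a) / 8) * (1 / (n + 1 : ℝ))) ∈ Set.Ioo a b := by
    intro n
    have hn0 : (0 : ℝ) < 1 / (n + 1 : ℝ) := by positivity
    have hn1 : (1 : ℝ) / (n + 1 : ℝ) ≤ 1 := by
      rw [div_le_one (by positivity)]; linarith [Nat.cast_nonneg (α := ℝ) n]
    constructor
    · rw [ht₀def]; nlinarith
    · rw [ht₀def]; nlinarith
  have htend : Tendsto u atTop (𝓝[≠] ((t₀ : ℝ) : ℂ)) := by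
    apply tendsto_nhdsWithin_of_tendsto_nhds_of_eventually_within
    · have hr : Tendsto (fun n : ℕ => (t₀ + ((b - a) / 8) * (1 / (n + 1 : ℝ)))) atTop (𝓝 t₀) := by
        have := tendsto_one_div_add_atTop_nhds_zero_nat (𝕜 := ℝ)
        have h2 := (tendsto_const_nhds (x := ((b - a) / 8 : ℝ)) (f := atTop (α := ℕ))).mul this
        rw [mul_zero] at h2
        simpa using (tendsto_const_nhds (x := t₀) (f := atTop (α := ℕ))).add h2
      exact (Complex.continuous_ofReal.continuousAt.tendsto).comp hr
    · refine Eventually.of_forall fun n => ?_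
      simp only [Set.mem_compl_iff, Set.mem_singleton_iff, hu]
      intro hcontra
      have := Complex.ofReal_inj.mp hcontra
      have hn0 : (0 : ℝ) < 1 / (n + 1 : ℝ) := by positivity
      nlinarith [hab]
  have hfreq : ∃ᶠ w in 𝓝[≠] ((t₀ : ℝ) : ℂ), F w = 0 :=
    htend.frequently (Frequently.of_forall fun n => hreal _ (hun n))
  have hx₀ : ((t₀ : ℝ) : ℂ) ∈ S := by simpa [hS] using ht₀
  have hzero : Set.EqOn F 0 S :=
    hana.eqOn_zero_of_preconnected_of_frequently_eq_zero hconv.isPreconnected hx₀ hfreq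
  have := hzero (show z ∈ S from hz)
  rw [hF] at this
  exact sub_eq_zero.mp this

lemma schwartz_fourier_integrable (f : SchwartzMap ℝ ℂ) : Integrable (𝓕 ⇑f) := by
  have := (SchwartzMap.fourierTransformCLM ℂ f).integrable (μ := volume)
  rwa [SchwartzMap.fourierTransformCLM_apply] at this

lemma fourier_continuous (f : SchwartzMap ℝ ℂ) : Continuous (𝓕 ⇑f) := by
  have := (SchwartzMap.fourierTransformCLM ℂ f).continuous
  rwa [SchwartzMap.fourierTransformCLM_apply] at this

lemma integral_schwartz_eq_of_charfun (ν₁ ν₂ : Measure ℝ) [IsFiniteMeasure ν₁] [IsFiniteMeasure ν₂]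
    (h : ∀ s : ℝ, ∫ x, Complex.exp ((s * x : ℝ) * Complex.I) ∂ν₁
        = ∫ x, Complex.exp ((s * x : ℝ) * Complex.I) ∂ν₂)
    (f : SchwartzMap ℝ ℂ) : ∫ x, f x ∂ν₁ = ∫ x, f x ∂ν₂ := by
  set g : ℝ → ℂ := 𝓕 ⇑f with hg
  have hginteg : Integrable g := schwartz_fourier_integrable f
  have hgcont : Continuous g := fourier_continuous f
  set F : ℝ → ℝ → ℂ := fun x s => Complex.exp ((2 * π * (s * x) : ℝ) * Complex.I) • g s with hF
  have hFcont : Continuous (Function.uncurry F) := by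
    apply Continuous.smul (f := fun p : ℝ × ℝ => Complex.exp ((2 * π * (p.2 * p.1) : ℝ) * Complex.I)) (g := fun p : ℝ × ℝ => g p.2)
    · exact Complex.continuous_exp.comp ((Complex.continuous_ofReal.comp
        (by continuity)).mul continuous_const)
    · exact hgcont.comp continuous_snd
  have hFnorm : ∀ x s, ‖F x s‖ = ‖g s‖ := by
    intro x s
    simp [hF, norm_smul, Complex.norm_exp]
  have hinv : ∀ x : ℝ, f x = ∫ s : ℝ, F x s := by
    intro x
    rw [← Continuous.fourierInv_fourier_eq f.continuous f.integrable hginteg]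
    rw [Real.fourierInv_eq']
    norm_num [RCLike.inner_apply, hF]
    simp_rw [mul_comm (x : ℂ), hg]
  have key : ∀ (ν : Measure ℝ) [IsFiniteMeasure ν],
      ∫ x, f x ∂ν = ∫ s : ℝ, (∫ x, Complex.exp ((2 * π * (s * x) : ℝ) * Complex.I) ∂ν) * g s := by
    intro ν _
    have hprod : Integrable (Function.uncurry F) (ν.prod volume) := by
      rw [integrable_prod_iff hFcont.aestronglyMeasurable]
      constructor
      · refine Eventually.of_forall fun x => ?_
        refine hginteg.norm.mono' ?_ (Eventually.of_forall fun s => ?_)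
        · exact (hFcont.comp (Continuous.prodMk_right x)).aestronglyMeasurable
        · exact le_of_eq (hFnorm x s)
      · have : (fun x : ℝ => ∫ s : ℝ, ‖F x s‖) = fun _ => ∫ s : ℝ, ‖g s‖ := by
          funext x; simp_rw [hFnorm]
        have : (fun x : ℝ => ∫ y : ℝ, ‖Function.uncurry F (x, y)‖ ∂volume) = fun _ => ∫ s : ℝ, ‖g s‖ := by
          funext x; simp_rw [Function.uncurry_apply_pair, hFnorm]
        rw [this]
        exact integrable_const _
    calc ∫ x, f x ∂ν = ∫ x, (∫ s : ℝ, F x s) ∂ν := by simp_rw [← hinv]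
      _ = ∫ s : ℝ, (∫ x, F x s ∂ν) := integral_integral_swap hprod
      _ = ∫ s : ℝ, (∫ x, Complex.exp ((2 * π * (s * x) : ℝ) * Complex.I) ∂ν) * g s := by
          congr 1; funext s; rw [← integral_mul_const]; simp_rw [hF, smul_eq_mul]
  rw [key ν₁, key ν₂]
  congr 1; funext s
  have := h (2 * π * s)
  have e : ∀ x : ℝ, ((2 * π * (s * x) : ℝ) : ℂ) = ((2 * π * s * x : ℝ) : ℂ) := by
    intro x; norm_cast; ring
  simp_rw [e]
  rw [this]

def ofCS (f : ℝ → ℂ) (hf : ContDiff ℝ ((⊤ : ℕ∞) : WithTop ℕ∞) f)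
    (hsupp : HasCompactSupport f) : SchwartzMap ℝ ℂ where
  toFun := f
  smooth' := hf
  decay' := by
    intro k n
    have h1 : Continuous fun x : ℝ => ‖x‖^k * ‖iteratedFDeriv ℝ n f x‖ :=
      (continuous_norm.pow k).mul
        (hf.continuous_iteratedFDeriv (by exact_mod_cast le_top)).norm
    have h2 : HasCompactSupport fun x : ℝ => ‖x‖^k * ‖iteratedFDeriv ℝ n f x‖ :=
      (hsupp.iteratedFDeriv n).norm.mul_left
    obtain ⟨C, hC⟩ := h1.bounded_above_of_compact_support h2
    exact ⟨C, fun x => (Real.le_norm_self _).trans (hC x)⟩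

@[simp] lemma ofCS_coe (f : ℝ → ℂ) (hf : ContDiff ℝ ((⊤ : ℕ∞) : WithTop ℕ∞) f)
    (hsupp : HasCompactSupport f) : ⇑(ofCS f hf hsupp) = f := rfl

def cut (q : ℝ) (n : ℕ) : ℝ → ℝ := fun x =>
  Real.smoothTransition (x + n + 1) * (1 - Real.smoothTransition ((n + 1) * (x - q)))

lemma cut_contDiff (q : ℝ) (n : ℕ) : ContDiff ℝ ((⊤ : ℕ∞) : WithTop ℕ∞) (cut q n) := by
  apply ContDiff.mul
  · exact (Real.smoothTransition.contDiff (n := ⊤)).comp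
      ((contDiff_id.add contDiff_const).add contDiff_const)
  · exact contDiff_const.sub ((Real.smoothTransition.contDiff (n := ⊤)).comp
      (contDiff_const.mul (contDiff_id.sub contDiff_const)))

lemma cut_support (q : ℝ) (n : ℕ) : ∀ x ∉ Icc (-(n:ℝ) - 1) (q + 1), cut q n x = 0 := by
  intro x hx
  rw [Set.mem_Icc, not_and_or] at hx
  rcases hx with hx1 | hx2
  · have : x + n + 1 ≤ 0 := by push_neg at hx1; linarith
    simp [cut, Real.smoothTransition.zero_of_nonpos this]
  · push_neg at hx2
    have hn : (0:ℝ) ≤ n := Nat.cast_nonneg n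
    have : (1:ℝ) ≤ (n + 1 : ℝ) * (x - q) := by nlinarith
    simp [cut, Real.smoothTransition.one_of_one_le this]

lemma cut_hcs (q : ℝ) (n : ℕ) : HasCompactSupport (cut q n) :=
  HasCompactSupport.intro (isCompact_Icc (a := -(n:ℝ) - 1) (b := q + 1)) (cut_support q n)

lemma cut_mem_Icc (q : ℝ) (n : ℕ) (x : ℝ) : cut q n x ∈ Icc (0:ℝ) 1 := by
  constructor
  · apply mul_nonneg (Real.smoothTransition.nonneg _)
    simp [Real.smoothTransition.le_one]
  · apply mul_le_one₀ (Real.smoothTransition.le_one _)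
    · simp [Real.smoothTransition.le_one]
    · simp [Real.smoothTransition.nonneg]

lemma cut_tendsto (q : ℝ) (x : ℝ) :
    Tendsto (fun n => cut q n x) atTop (𝓝 (Set.indicator (Iic q) (1 : ℝ → ℝ) x)) := by
  rcases le_or_gt x q with hx | hx
  · have h0 : Set.indicator (Iic q) (1 : ℝ → ℝ) x = 1 := by simp [hx]
    rw [h0]
    apply tendsto_atTop_of_eventually_const (i₀ := ⌈-x⌉₊)
    intro n hn
    have hx1 : (1:ℝ) ≤ x + n + 1 := by
      have := Nat.ceil_le.mp hn
      linarith
    have hx2 : (n + 1 : ℝ) * (x - q) ≤ 0 :=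
      mul_nonpos_of_nonneg_of_nonpos (by positivity) (by linarith)
    simp [cut, Real.smoothTransition.one_of_one_le hx1,
      Real.smoothTransition.zero_of_nonpos hx2]
  · have h0 : Set.indicator (Iic q) (1 : ℝ → ℝ) x = 0 := by simp [not_le.mpr hx]
    rw [h0]
    apply tendsto_atTop_of_eventually_const (i₀ := ⌈1 / (x - q)⌉₊)
    intro n hn
    have hxq : 0 < x - q := by linarith
    have h1 : (1 / (x - q) : ℝ) ≤ n := Nat.ceil_le.mp hn
    have : (1:ℝ) ≤ (n + 1 : ℝ) * (x - q) := by
      have h2 : (1 / (x - q)) * (x - q) ≤ (n + 1 : ℝ) * (x - q) := by nlinarith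
      rw [one_div_mul_cancel hxq.ne'] at h2
      exact h2
    simp [cut, Real.smoothTransition.one_of_one_le this]

lemma ext_of_schwartz (ν₁ ν₂ : Measure ℝ) [IsFiniteMeasure ν₁] [IsFiniteMeasure ν₂]
    (h : ∀ f : SchwartzMap ℝ ℂ, ∫ x, f x ∂ν₁ = ∫ x, f x ∂ν₂) : ν₁ = ν₂ := by
  apply Measure.ext_of_Iic
  intro q
  have hint : ∀ n : ℕ, ∫ x, cut q n x ∂ν₁ = ∫ x, cut q n x ∂ν₂ := by
    intro n
    have hc : ContDiff ℝ ((⊤ : ℕ∞) : WithTop ℕ∞) (fun x => (cut q n x : ℂ)) :=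
      Complex.ofRealCLM.contDiff.comp (cut_contDiff q n)
    have hcs : HasCompactSupport (fun x => (cut q n x : ℂ)) :=
      HasCompactSupport.comp_left (cut_hcs q n) Complex.ofReal_zero
    have h2 := h (ofCS _ hc hcs)
    rw [ofCS_coe] at h2
    have e1 : ∀ (ν : Measure ℝ), ∫ x, ((cut q n x : ℝ) : ℂ) ∂ν = ((∫ x, cut q n x ∂ν : ℝ) : ℂ) :=
      fun ν => integral_ofReal (𝕜 := ℂ)
    rw [e1, e1] at h2
    exact_mod_cast h2
  have hlim : ∀ (ν : Measure ℝ) [IsFiniteMeasure ν],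
      Tendsto (fun n => ∫ x, cut q n x ∂ν) atTop (𝓝 ((ν (Iic q)).toReal)) := by
    intro ν _
    have h0 : (ν (Iic q)).toReal = ∫ x, Set.indicator (Iic q) (1 : ℝ → ℝ) x ∂ν :=
      (MeasureTheory.integral_indicator_one measurableSet_Iic).symm
    rw [h0]
    apply tendsto_integral_of_dominated_convergence (bound := fun _ => (1:ℝ))
    · exact fun n => ((cut_contDiff q n).continuous).aestronglyMeasurable
    · exact integrable_const 1
    · intro n
      refine Eventually.of_forall fun x => ?_
      have hm := cut_mem_Icc q n x
      rw [Real.norm_eq_abs, _root_.abs_of_nonneg hm.1]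
      exact hm.2
    · exact Eventually.of_forall fun x => cut_tendsto q x
  have := tendsto_nhds_unique ((hlim ν₁).congr hint) (hlim ν₂)
  exact (ENNReal.toReal_eq_toReal_iff' (measure_ne_top _ _) (measure_ne_top _ _)).mp this

end EqOfLaplaceAux


theorem eq_of_laplace_eq_on_interval
    (μ₁ μ₂ : Measure ℝ) [IsFiniteMeasure μ₁] [IsFiniteMeasure μ₂]
    (a b : ℝ) (hab : a < b)
    (h₁ : ∀ t ∈ Set.Ioo a b, Integrable (fun x => exp (t * x)) μ₁)
    (h₂ : ∀ t ∈ Set.Ioo a b, Integrable (fun x => exp (t * x)) μ₂)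
    (heq : ∀ t ∈ Set.Ioo a b, ∫ x, exp (t * x) ∂μ₁ = ∫ x, exp (t * x) ∂μ₂) :
    μ₁ = μ₂ := by
  set t₀ : ℝ := (a + b) / 2 with ht₀def
  have ht₀ : t₀ ∈ Set.Ioo a b := ⟨by rw [ht₀def]; linarith, by rw [ht₀def]; linarith⟩
  set d : ℝ → ℝ≥0∞ := fun x => ENNReal.ofReal (Real.exp (t₀ * x)) with hd
  set ν₁ : Measure ℝ := μ₁.withDensity d with hν₁
  set ν₂ : Measure ℝ := μ₂.withDensity d with hν₂
  haveI hfin1 : IsFiniteMeasure ν₁ := isFiniteMeasure_withDensity_ofReal (h₁ t₀ ht₀).2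
  haveI hfin2 : IsFiniteMeasure ν₂ := isFiniteMeasure_withDensity_ofReal (h₂ t₀ ht₀).2
  -- characteristic functions of the tilted measures agree
  have hmeasw : Measurable fun x : ℝ => Real.toNNReal (Real.exp (t₀ * x)) :=
    measurable_real_toNNReal.comp (Real.continuous_exp.comp (continuous_const.mul
      continuous_id)).measurable
  have htilt : ∀ (μ : Measure ℝ) (s : ℝ),
      ∫ x, Complex.exp ((s * x : ℝ) * Complex.I) ∂(μ.withDensity d)
        = ∫ x, Complex.exp ((↑t₀ + ↑s * Complex.I) * x) ∂μ := by
    intro μ s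
    have hrepr : μ.withDensity d
        = μ.withDensity fun x => ((Real.toNNReal (Real.exp (t₀ * x)) : ℝ≥0) : ℝ≥0∞) := rfl
    rw [hrepr, integral_withDensity_eq_integral_smul hmeasw]
    congr 1
    funext x
    rw [NNReal.smul_def, Real.coe_toNNReal _ (Real.exp_pos _).le, Complex.real_smul,
      Complex.ofReal_exp, ← Complex.exp_add]
    congr 1
    push_cast
    ring
  have hchar : ∀ s : ℝ, ∫ x, Complex.exp ((s * x : ℝ) * Complex.I) ∂ν₁
      = ∫ x, Complex.exp ((s * x : ℝ) * Complex.I) ∂ν₂ := by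
    intro s
    rw [hν₁, hν₂, htilt μ₁ s, htilt μ₂ s]
    apply laplace_eqOn_strip hab h₁ h₂ heq
    simpa using ht₀
  -- hence the tilted measures agree
  have hν : ν₁ = ν₂ := ext_of_schwartz ν₁ ν₂ (integral_schwartz_eq_of_charfun ν₁ ν₂ hchar)
  -- recover the original measures
  have hmeasd : Measurable d := ENNReal.measurable_ofReal.comp
    (Real.continuous_exp.comp (continuous_const.mul continuous_id)).measurable
  have hmeasd' : Measurable fun x : ℝ => ENNReal.ofReal (Real.exp (-t₀ * x)) :=
    ENNReal.measurable_ofReal.comp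
      (Real.continuous_exp.comp (continuous_const.mul continuous_id)).measurable
  have hrec : ∀ (μ : Measure ℝ),
      (μ.withDensity d).withDensity (fun x => ENNReal.ofReal (Real.exp (-t₀ * x))) = μ := by
    intro μ
    rw [← withDensity_mul μ hmeasd hmeasd']
    have h1 : (d * fun x => ENNReal.ofReal (Real.exp (-t₀ * x))) = (1 : ℝ → ℝ≥0∞) := by
      funext x
      rw [Pi.mul_apply, hd, ← ENNReal.ofReal_mul (Real.exp_pos _).le, ← Real.exp_add]
      simp
    rw [h1, withDensity_one]
  calc μ₁ = (μ₁.withDensity d).withDensity (fun x => ENNReal.ofReal (Real.exp (-t₀ * x))) :=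
        (hrec μ₁).symm
    _ = (μ₂.withDensity d).withDensity (fun x => ENNReal.ofReal (Real.exp (-t₀ * x))) := by
        rw [← hν₁, ← hν₂, hν]
    _ = μ₂ := hrec μ₂
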